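/- For every positive integer d there is a constant C = C(d) such that for all n ≥ 1 there are at most d·log₂(n) + C subsets A₁, …, A_f of [n] with the separating property: for any two distinct subsets X, Y ⊆ [n] of size at most d, some A_i satisfies |A_i ∩ X| ≢ |A_i ∩ Y| (mod 2). -/

import Mathlib

open Polynomial Finset

lemma powsum_zero {F : Type*} [Field F] [DecidableEq F] {d : ℕ} (S : Finset F) (h0 : (0:F) ∉ S)
    (hcard : S.card ≤ 2*d) (hp : ∀ j, 1 ≤ j → j ≤ 2*d → ∑ x ∈ S, x^j = 0) : S = ∅ := by
  by_contra hne
  obtain ⟨x₀, hx₀⟩ := Finset.nonempty_iff_ne_empty.2 hne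
  set P : F[X] := X * ∏ x ∈ S.erase x₀, (X - C x) with hP
  have hdeg : P.natDegree ≤ S.card := by
    calc P.natDegree ≤ (X : F[X]).natDegree + (∏ x ∈ S.erase x₀, (X - C x)).natDegree :=
          natDegree_mul_le
    _ ≤ 1 + ∑ x ∈ S.erase x₀, (X - C x).natDegree := by
          gcongr
          · exact natDegree_X_le
          · exact natDegree_prod_le _ _
    _ ≤ 1 + (S.card - 1) := by
          gcongr
          calc ∑ x ∈ S.erase x₀, (X - C x).natDegree ≤ ∑ _x ∈ S.erase x₀, 1 := by
                gcongr with x hx; exact (natDegree_X_sub_C x).le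
          _ = S.card - 1 := by rw [Finset.sum_const, smul_eq_mul, mul_one, Finset.card_erase_of_mem hx₀]
    _ ≤ S.card := by have := Finset.card_pos.2 ⟨x₀, hx₀⟩; omega
  have hc0 : P.coeff 0 = 0 := by
    rw [hP, mul_coeff_zero, coeff_X_zero, zero_mul]
  have hsum : ∑ x ∈ S, P.eval x = P.eval x₀ := by
    refine Finset.sum_eq_single_of_mem x₀ hx₀ ?_
    intro x hx hne
    rw [hP, eval_mul, eval_prod]
    have : ∏ y ∈ S.erase x₀, (x - y) = 0 :=
      Finset.prod_eq_zero (Finset.mem_erase.2 ⟨hne, hx⟩) (by ring)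
    simp [this]
  have hev0 : P.eval x₀ ≠ 0 := by
    rw [hP, eval_mul, eval_prod]
    apply mul_ne_zero
    · simp only [eval_X]
      intro h; exact h0 (h ▸ hx₀)
    · apply Finset.prod_ne_zero_iff.2
      intro y hy
      have := (Finset.mem_erase.1 hy).1
      simp only [eval_sub, eval_X, eval_C, sub_ne_zero]
      exact Ne.symm this
  have hzero : ∑ x ∈ S, P.eval x = 0 := by
    have hlt : P.natDegree < 2*d + 1 := by omega
    calc ∑ x ∈ S, P.eval x = ∑ x ∈ S, ∑ j ∈ Finset.range (2*d+1), P.coeff j * x ^ j := by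
          refine Finset.sum_congr rfl fun x _ => ?_
          exact eval_eq_sum_range' hlt x
    _ = ∑ j ∈ Finset.range (2*d+1), P.coeff j * ∑ x ∈ S, x ^ j := by
          rw [Finset.sum_comm]; simp [Finset.mul_sum]
    _ = 0 := by
          apply Finset.sum_eq_zero
          intro j hj
          rcases Nat.eq_zero_or_pos j with h | h
          · simp [h, hc0]
          · rw [hp j h (by simp at hj; omega), mul_zero]
  rw [hsum] at hzero
  exact hev0 hzero


lemma zmod2_cases : ∀ a : ZMod 2, a ≠ 1 → a = 0 := by decide

lemma powsum_all {F : Type*} [CommRing F] [CharP F 2] {d : ℕ} {ι : Type*} (S : Finset ι)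
    (g : ι → F) (h : ∀ t, t < d → ∑ i ∈ S, (g i)^(2*t+1) = 0) :
    ∀ j, 1 ≤ j → j ≤ 2*d → ∑ i ∈ S, (g i)^j = 0 := by
  intro j
  induction j using Nat.strong_induction_on with
  | _ j ih =>
    intro h1 h2
    rcases Nat.even_or_odd j with he | ho
    · obtain ⟨t, rfl⟩ := he
      have ht1 : 1 ≤ t := by omega
      have : ∑ i ∈ S, (g i)^(t+t) = (∑ i ∈ S, (g i)^t)^2 := by
        rw [sum_pow_char (p := 2)]
        exact Finset.sum_congr rfl fun i _ => by ring
      rw [this, ih t (by omega) ht1 (by omega)]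
      ring
    · obtain ⟨t, rfl⟩ := ho
      exact h t (by omega)


theorem parity_search_d_log_n (d : ℕ) (hd : 0 < d) :
    ∃ C : ℝ, ∀ n : ℕ, 1 ≤ n →
      ∃ (f : ℕ) (A : Fin f → Finset (Fin n)),
        (f : ℝ) ≤ d * Real.logb 2 n + C ∧
        ∀ X Y : Finset (Fin n), X ≠ Y → X.card ≤ d → Y.card ≤ d →
          ∃ i : Fin f, (A i ∩ X).card % 2 ≠ (A i ∩ Y).card % 2 := by
  classical
  refine ⟨d, fun n hn => ?_⟩
  haveI : Fact (Nat.Prime 2) := ⟨Nat.prime_two⟩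
  set m := Nat.clog 2 (n+1) with hm
  have hm1 : 1 ≤ m := Nat.clog_pos one_lt_two (by omega)
  set F := GaloisField 2 m with hF
  haveI : Fintype F := Fintype.ofFinite F
  have hcardF : Fintype.card F = 2 ^ m := by
    rw [← Nat.card_eq_fintype_card]
    exact GaloisField.card 2 m (by omega)
  -- injection into nonzero elements
  have hle : n ≤ Fintype.card {y : F // y ≠ 0} := by
    have hc : Fintype.card {y : F // y ≠ 0} = Fintype.card F - 1 := by
      rw [Fintype.card_subtype_compl, Fintype.card_subtype_eq]
    have hle2 := Nat.le_pow_clog one_lt_two (n+1)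
    rw [← hm] at hle2
    rw [hc, hcardF]
    omega
  obtain ⟨e⟩ := Function.Embedding.nonempty_of_card_le ((Fintype.card_fin n).symm ▸ hle)
  set x : Fin n → F := fun i => (e i).1 with hx
  have hxne : ∀ i, x i ≠ 0 := fun i => (e i).2
  have hxinj : Function.Injective x := fun i j h => e.injective (Subtype.ext h)
  -- basis
  set r := Module.finrank (ZMod 2) F with hrdef
  have hr : r = m := GaloisField.finrank 2 (by omega)
  set b : Module.Basis (Fin r) (ZMod 2) F := Module.finBasis (ZMod 2) F with hb
  refine ⟨d * r, fun i' =>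
    (fun jk : Fin d × Fin r => Finset.univ.filter
      (fun i => b.coord jk.2 ((x i) ^ (2 * (jk.1 : ℕ) + 1)) = 1)) (finProdFinEquiv.symm i'),
    ?_, ?_⟩
  · -- counting bound
    have h2 : (2:ℕ) ^ (m - 1) ≤ n := by
      have h3 := Nat.pow_pred_clog_lt_self one_lt_two (x := n+1) (by omega : 1 < n+1)
      rw [← hm, Nat.pred_eq_sub_one] at h3
      omega
    have hlogb : ((m:ℝ) - 1) ≤ Real.logb 2 n := by
      have h2' : ((2:ℝ)) ^ (m-1) ≤ (n:ℝ) := by exact_mod_cast h2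
      calc ((m:ℝ) - 1) = ((m-1 : ℕ) : ℝ) := by
            push_cast [Nat.cast_sub hm1]; ring
      _ = Real.logb 2 ((2:ℝ) ^ (m-1)) := by
            rw [Real.logb_pow, Real.logb_self_eq_one (by norm_num)]; ring
      _ ≤ Real.logb 2 n := by
            exact Real.logb_le_logb_of_le (by norm_num) (by positivity) h2'
    calc ((d * r : ℕ) : ℝ) = d * (m:ℝ) := by rw [hr]; push_cast; ring
    _ ≤ d * (Real.logb 2 n + 1) := by
          apply mul_le_mul_of_nonneg_left (by linarith) (by positivity)
    _ = d * Real.logb 2 n + d := by ring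
  · -- separation
    intro X Y hXY hX hY
    by_contra hcon
    push_neg at hcon
    -- parity sums in ZMod 2
    have key : ∀ (j : ℕ) (k : Fin r) (Z : Finset (Fin n)),
        ((((Finset.univ.filter (fun i => b.coord k ((x i) ^ j) = 1)) ∩ Z).card : ZMod 2))
          = b.coord k (∑ i ∈ Z, (x i) ^ j) := by
      intro j k Z
      have h1 : (Finset.univ.filter (fun i => b.coord k ((x i) ^ j) = 1)) ∩ Z
          = Z.filter (fun i => b.coord k ((x i) ^ j) = 1) := by
        ext i; simp [and_comm]
      rw [h1, map_sum, Finset.card_filter]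
      push_cast
      refine Finset.sum_congr rfl fun i _ => ?_
      by_cases h : b.coord k ((x i) ^ j) = 1
      · simp [h]
      · simp [h, zmod2_cases _ h]
    have hsums : ∀ t : ℕ, t < d → ∀ k : Fin r,
        b.coord k (∑ i ∈ X, (x i) ^ (2*t+1)) = b.coord k (∑ i ∈ Y, (x i) ^ (2*t+1)) := by
      intro t ht k
      have := hcon (finProdFinEquiv (⟨t, ht⟩, k))
      rw [Equiv.symm_apply_apply] at this
      have hmod : (((Finset.univ.filter (fun i => b.coord k ((x i) ^ (2*t+1)) = 1)) ∩ X).card : ZMod 2)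
          = (((Finset.univ.filter (fun i => b.coord k ((x i) ^ (2*t+1)) = 1)) ∩ Y).card : ZMod 2) := by
        rw [ZMod.natCast_eq_natCast_iff]
        exact this
      rw [key, key] at hmod
      exact hmod
    have hsum_eq : ∀ t : ℕ, t < d →
        ∑ i ∈ X, (x i) ^ (2*t+1) = ∑ i ∈ Y, (x i) ^ (2*t+1) := by
      intro t ht
      have : ∀ k, b.coord k ((∑ i ∈ X, (x i) ^ (2*t+1)) - ∑ i ∈ Y, (x i) ^ (2*t+1)) = 0 := by
        intro k; rw [map_sub, hsums t ht k, sub_self]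
      exact sub_eq_zero.1 (b.forall_coord_eq_zero_iff.1 this)
    haveI : CharP F 2 := inferInstanceAs (CharP (GaloisField 2 m) 2)
    have hSsum : ∀ t, t < d → ∑ i ∈ symmDiff X Y, (x i)^(2*t+1) = 0 := by
      intro t ht
      have hdisj : Disjoint (X \ Y) (Y \ X) := disjoint_sdiff_sdiff
      have hsplit : ∑ i ∈ symmDiff X Y, (x i)^(2*t+1)
          = ∑ i ∈ X \ Y, (x i)^(2*t+1) + ∑ i ∈ Y \ X, (x i)^(2*t+1) := by
        rw [symmDiff_def, Finset.sup_eq_union, Finset.sum_union hdisj]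
      have h1 : ∑ i ∈ X \ Y, (x i)^(2*t+1)
          = ∑ i ∈ X, (x i)^(2*t+1) - ∑ i ∈ X ∩ Y, (x i)^(2*t+1) := by
        rw [← Finset.sdiff_inter_self_left X Y]
        exact Finset.sum_sdiff_eq_sub Finset.inter_subset_left
      have h2 : ∑ i ∈ Y \ X, (x i)^(2*t+1)
          = ∑ i ∈ Y, (x i)^(2*t+1) - ∑ i ∈ X ∩ Y, (x i)^(2*t+1) := by
        rw [← Finset.sdiff_inter_self_left Y X, Finset.inter_comm Y X]
        exact Finset.sum_sdiff_eq_sub (Finset.inter_comm Y X ▸ Finset.inter_subset_left)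
      rw [hsplit, h1, h2, hsum_eq t ht]
      exact CharTwo.add_self_eq_zero _
    set S := symmDiff X Y with hS
    set T := S.image x with hT
    have hT0 : (0:F) ∉ T := by
      simp only [hT, Finset.mem_image]
      rintro ⟨i, _, h⟩
      exact hxne i h
    have hTcard : T.card ≤ 2*d := by
      have h1 : T.card = S.card := Finset.card_image_of_injective S hxinj
      have h2 : S ⊆ X ∪ Y := by
        rw [hS, symmDiff_def, Finset.sup_eq_union]
        exact Finset.union_subset (Finset.sdiff_subset.trans Finset.subset_union_left)
          (Finset.sdiff_subset.trans Finset.subset_union_right)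
      have h3 := (Finset.card_le_card h2).trans (Finset.card_union_le X Y)
      omega
    have hTpow : ∀ j, 1 ≤ j → j ≤ 2*d → ∑ y ∈ T, y^j = 0 := by
      intro j h1 h2
      rw [hT, Finset.sum_image (fun a _ c _ h => hxinj h)]
      exact powsum_all S x hSsum j h1 h2
    have hTe := powsum_zero T hT0 hTcard hTpow
    rw [hT, Finset.image_eq_empty] at hTe
    exact hXY (Finset.symmDiff_eq_empty.1 hTe)
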